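/- Consider the noisy saddle with parameters a₁, a₂ > 0 and b₁, b₂ ∈ ℝ, driven by paths w¹, w² of linear growth. Every solution starting on the stable manifold converges forward in time to the stationary orbit: if x₀ = x̃_{a₁,b₁}(w¹) and y₀ ∈ ℝ, then for every t ∈ ℝ the Euclidean distance ‖( φ_{a₁,b₁}(t, w¹, x₀), ψ_{a₂,b₂}(t, w², y₀) ) − ( x̃_{a₁,b₁}(θ_t w¹), ỹ_{a₂,b₂}(θ_t w²) )‖ equals |y₀ − ỹ_{a₂,b₂}(w²)| e^{−a₂ t}, and in particular it tends to 0 as t → +∞. -/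

import Mathlib

open MeasureTheory Filter Topology

/-- The pathwise solution operator `φ_{a,b}` of the expanding component `dX = aX dt + b dW`. -/
noncomputable def phiSol (a b t : ℝ) (w : ℝ → ℝ) (x : ℝ) : ℝ :=
  Real.exp (a * t) * x + b * w t +
    a * b * Real.exp (a * t) * ∫ s in (0 : ℝ)..t, Real.exp (-a * s) * w s

/-- The pathwise solution operator `ψ_{a,b}` of the contracting component `dY = -aY dt + b dW`. -/
noncomputable def psiSol (a b t : ℝ) (w : ℝ → ℝ) (y : ℝ) : ℝ :=
  Real.exp (-a * t) * y + b * w t -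
    a * b * Real.exp (-a * t) * ∫ s in (0 : ℝ)..t, Real.exp (a * s) * w s

/-- The shift `θ_t w` of a path `w`: `(θ_t w)(s) = w(t + s) - w(t)`. -/
def shiftPath (t : ℝ) (w : ℝ → ℝ) : ℝ → ℝ := fun s => w (t + s) - w t

/-- `x̃_{a,b}(w) = -a b ∫₀^∞ e^{-a s} w(s) ds`. -/
noncomputable def xStat (a b : ℝ) (w : ℝ → ℝ) : ℝ :=
  -(a * b) * ∫ s in Set.Ioi (0 : ℝ), Real.exp (-a * s) * w s

/-- `ỹ_{a,b}(w) = -a b ∫_{-∞}^0 e^{a s} w(s) ds`. -/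
noncomputable def yStat (a b : ℝ) (w : ℝ → ℝ) : ℝ :=
  -(a * b) * ∫ s in Set.Iio (0 : ℝ), Real.exp (a * s) * w s


section Aux

open Set MeasureTheory

/-- Integrability of `e^{-as} w(s)` on `(T, ∞)` for `w` of linear growth. -/
lemma intOn_Ioi {a C : ℝ} (ha : 0 < a) (hC : 0 ≤ C) {w : ℝ → ℝ} (hw : Continuous w)
    (hg : ∀ s : ℝ, |w s| ≤ C * (1 + |s|)) (T : ℝ) :
    IntegrableOn (fun s => Real.exp (-a * s) * w s) (Ioi T) := by
  set K : ℝ := 1 + |T| - T with hK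
  have hG : ∀ s : ℝ, HasDerivAt (fun s => -(Real.exp (-a * s) * ((K + s) / a + 1 / a ^ 2)))
      (Real.exp (-a * s) * (K + s)) s := by
    intro s
    have h1 : HasDerivAt (fun s : ℝ => -a * s) (-a) s := by
      simpa using (hasDerivAt_id s).const_mul (-a)
    have h2 : HasDerivAt (fun s : ℝ => Real.exp (-a * s)) (Real.exp (-a * s) * (-a)) s := h1.exp
    have h3 : HasDerivAt (fun s : ℝ => (K + s) / a + 1 / a ^ 2) (1 / a) s := by
      have h := (((hasDerivAt_id s).const_add K).div_const a).add_const (1 / a ^ 2)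
      simp only [one_div] at h ⊢
      exact h
    have := (h2.mul h3).neg
    refine this.congr_deriv ?_
    field_simp
    ring
  have hlim : Filter.Tendsto (fun s => -(Real.exp (-a * s) * ((K + s) / a + 1 / a ^ 2)))
      Filter.atTop (nhds 0) := by
    have hmul : Filter.Tendsto (fun s : ℝ => a * s) Filter.atTop Filter.atTop :=
      Filter.Tendsto.const_mul_atTop ha Filter.tendsto_id
    have h1 : Filter.Tendsto (fun s : ℝ => Real.exp (-a * s)) Filter.atTop (nhds 0) := by
      have hneg : Filter.Tendsto (fun s : ℝ => -(a * s)) Filter.atTop Filter.atBot :=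
        tendsto_neg_atTop_atBot.comp hmul
      exact (Real.tendsto_exp_atBot.comp hneg).congr fun s => by
        simp [Function.comp, neg_mul]
    have h2 : Filter.Tendsto (fun s : ℝ => (a * s) ^ 1 * Real.exp (-(a * s)))
        Filter.atTop (nhds 0) := (Real.tendsto_pow_mul_exp_neg_atTop_nhds_zero 1).comp hmul
    have h2' : Filter.Tendsto (fun s : ℝ => s * Real.exp (-a * s)) Filter.atTop (nhds 0) := by
      have := h2.const_mul (1 / a)
      rw [mul_zero] at this
      refine this.congr fun s => ?_
      field_simp
    have : Filter.Tendsto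
        (fun s : ℝ => -(Real.exp (-a * s) * (K / a) + (s * Real.exp (-a * s)) * (1 / a)
          + Real.exp (-a * s) * (1 / a ^ 2))) Filter.atTop (nhds 0) := by
      have := (((h1.mul_const (K / a)).add (h2'.mul_const (1 / a))).add
        (h1.mul_const (1 / a ^ 2))).neg
      simpa using this
    refine this.congr fun s => ?_
    ring
  have hdom : IntegrableOn (fun s => Real.exp (-a * s) * (K + s)) (Ioi T) := by
    refine integrableOn_Ioi_deriv_of_nonneg' (fun x _ => hG x) (fun x hx => ?_) hlim
    have : (0:ℝ) ≤ K + x := by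
      have := abs_nonneg T
      have hx' : T < x := hx
      cases abs_cases T with
      | inl h => simp only [hK]; nlinarith
      | inr h => simp only [hK]; nlinarith
    positivity
  refine Integrable.mono' (hdom.const_mul C) ?_ ?_
  · exact (((Real.continuous_exp.comp (continuous_const.mul continuous_id)).mul
      hw).aestronglyMeasurable).restrict
  · filter_upwards [ae_restrict_mem measurableSet_Ioi] with s hs
    have hs' : T < s := hs
    have hKs : 1 + |s| ≤ K + s := by
      cases abs_cases s with
      | inl h => cases abs_cases T with
        | inl h' => simp only [hK]; nlinarith
        | inr h' => simp only [hK]; nlinarith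
      | inr h => cases abs_cases T with
        | inl h' => simp only [hK]; nlinarith
        | inr h' => simp only [hK]; nlinarith
    have h1 : ‖Real.exp (-a * s) * w s‖ = Real.exp (-a * s) * |w s| := by
      rw [norm_mul, Real.norm_eq_abs, Real.norm_eq_abs, abs_of_pos (Real.exp_pos _)]
    rw [h1]
    calc Real.exp (-a * s) * |w s| ≤ Real.exp (-a * s) * (C * (1 + |s|)) := by
          exact mul_le_mul_of_nonneg_left (hg s) (Real.exp_pos _).le
      _ ≤ C * (Real.exp (-a * s) * (K + s)) := by
          have := mul_le_mul_of_nonneg_left hKs (mul_nonneg hC (Real.exp_pos (-a*s)).le)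
          nlinarith [Real.exp_pos (-a * s), abs_nonneg s, hC]

/-- Splitting an interval integral off an improper integral over `Ioi`. -/
lemma split_Ioi {f : ℝ → ℝ} (hf : ∀ T : ℝ, IntegrableOn f (Ioi T)) (u v : ℝ) :
    ∫ s in u..v, f s = (∫ s in Ioi u, f s) - ∫ s in Ioi v, f s := by
  have key : ∀ u v : ℝ, u ≤ v →
      ∫ s in u..v, f s = (∫ s in Ioi u, f s) - ∫ s in Ioi v, f s := by
    intro u v huv
    have hunion : Ioc u v ∪ Ioi v = Ioi u := Ioc_union_Ioi_eq_Ioi huv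
    have hdisj : Disjoint (Ioc u v) (Ioi v) := Ioc_disjoint_Ioi le_rfl
    have h2 : IntegrableOn f (Ioc u v) := ((hf u).mono_set Ioc_subset_Ioi_self)
    have := setIntegral_union hdisj measurableSet_Ioi h2 (hf v) (f := f) (μ := volume)
    rw [hunion] at this
    rw [intervalIntegral.integral_of_le huv]
    linarith
  rcases le_total u v with h | h
  · exact key u v h
  · rw [intervalIntegral.integral_symm, key v u h]; ring

/-- Translation of an improper integral over `Ioi`. -/
lemma translate_Ioi (f : ℝ → ℝ) (t : ℝ) :
    ∫ s in Ioi t, f s = ∫ s in Ioi (0:ℝ), f (t + s) := by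
  have A : MeasurableEmbedding (fun x : ℝ => t + x) :=
    (Homeomorph.addLeft t).isClosedEmbedding.measurableEmbedding
  have := A.setIntegral_map (μ := volume) f (Ioi t)
  rw [map_add_left_eq_self (volume : Measure ℝ) t] at this
  have hset : (fun x : ℝ => t + x) ⁻¹' Ioi t = Ioi 0 := by ext x; simp
  rw [this, hset]

/-- `∫₀^∞ e^{-as} ds = 1/a`. -/
lemma integral_exp_neg_mul_Ioi {a : ℝ} (ha : 0 < a) :
    ∫ s in Ioi (0:ℝ), Real.exp (-a * s) = 1 / a := by
  have hderiv : ∀ x ∈ Ici (0:ℝ), HasDerivAt (fun s : ℝ => -Real.exp (-a * s) / a)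
      (Real.exp (-a * x)) x := by
    intro x _
    have h1 : HasDerivAt (fun s : ℝ => -a * s) (-a) x := by
      simpa using (hasDerivAt_id x).const_mul (-a)
    have h2 := (h1.exp.neg).div_const a
    refine h2.congr_deriv ?_
    field_simp
  have hint : IntegrableOn (fun s : ℝ => Real.exp (-a * s)) (Ioi 0) :=
    exp_neg_integrableOn_Ioi 0 ha
  have hlim : Filter.Tendsto (fun s : ℝ => -Real.exp (-a * s) / a) Filter.atTop (nhds 0) := by
    have hmul : Filter.Tendsto (fun s : ℝ => a * s) Filter.atTop Filter.atTop :=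
      Filter.Tendsto.const_mul_atTop ha Filter.tendsto_id
    have h1 : Filter.Tendsto (fun s : ℝ => Real.exp (-a * s)) Filter.atTop (nhds 0) := by
      have hneg : Filter.Tendsto (fun s : ℝ => -(a * s)) Filter.atTop Filter.atBot :=
        tendsto_neg_atTop_atBot.comp hmul
      exact (Real.tendsto_exp_atBot.comp hneg).congr fun s => by
        simp [Function.comp, neg_mul]
    have := (h1.neg).div_const a
    simpa using this
  have := integral_Ioi_of_hasDerivAt_of_tendsto' hderiv hint hlim
  rw [this]
  simp [neg_div]

/-- The main pathwise identity for the expanding component. -/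
lemma phiSol_eq {a : ℝ} (ha : 0 < a) (b : ℝ) {C : ℝ} (hC : 0 ≤ C) {w : ℝ → ℝ}
    (hw : Continuous w) (hg : ∀ s : ℝ, |w s| ≤ C * (1 + |s|)) (t x : ℝ) :
    phiSol a b t w x = xStat a b (shiftPath t w) + Real.exp (a * t) * (x - xStat a b w) := by
  have hint : ∀ T : ℝ, IntegrableOn (fun s => Real.exp (-a * s) * w s) (Ioi T) :=
    intOn_Ioi ha hC hw hg
  set I0 : ℝ := ∫ s in Ioi (0:ℝ), Real.exp (-a * s) * w s with hI0
  set It : ℝ := ∫ s in Ioi t, Real.exp (-a * s) * w s with hIt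
  have hsplit : ∫ s in (0:ℝ)..t, Real.exp (-a * s) * w s = I0 - It := split_Ioi hint 0 t
  -- the shifted path integrand
  have hwt : Continuous (fun s : ℝ => w (t + s)) := hw.comp (continuous_const.add continuous_id)
  have hgt : ∀ s : ℝ, |w (t + s)| ≤ (C * (1 + |t|)) * (1 + |s|) := by
    intro s
    calc |w (t + s)| ≤ C * (1 + |t + s|) := hg _
      _ ≤ (C * (1 + |t|)) * (1 + |s|) := by
          have h1 : |t + s| ≤ |t| + |s| := abs_add_le t s
          have h2 : 1 + |t + s| ≤ (1 + |t|) * (1 + |s|) := by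
            nlinarith [abs_nonneg t, abs_nonneg s, mul_nonneg (abs_nonneg t) (abs_nonneg s)]
          calc C * (1 + |t + s|) ≤ C * ((1 + |t|) * (1 + |s|)) :=
                mul_le_mul_of_nonneg_left h2 hC
            _ = (C * (1 + |t|)) * (1 + |s|) := by ring
  have hintt : IntegrableOn (fun s => Real.exp (-a * s) * w (t + s)) (Ioi (0:ℝ)) :=
    intOn_Ioi ha (by positivity) hwt hgt 0
  have hexpint : IntegrableOn (fun s : ℝ => Real.exp (-a * s)) (Ioi (0:ℝ)) :=
    exp_neg_integrableOn_Ioi 0 ha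
  have htrans : ∫ s in Ioi (0:ℝ), Real.exp (-a * s) * w (t + s) = Real.exp (a * t) * It := by
    rw [hIt, translate_Ioi (fun s => Real.exp (-a * s) * w s) t]
    rw [← integral_const_mul]
    congr 1
    ext s
    rw [show -a * s = a * t + -a * (t + s) by ring, Real.exp_add, mul_assoc]
  have hxshift : xStat a b (shiftPath t w)
      = -(a * b) * (Real.exp (a * t) * It - w t * (1 / a)) := by
    rw [xStat]
    congr 1
    have : ∀ s : ℝ, Real.exp (-a * s) * shiftPath t w s
        = Real.exp (-a * s) * w (t + s) - Real.exp (-a * s) * w t := by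
      intro s; rw [shiftPath]; ring
    rw [setIntegral_congr_fun measurableSet_Ioi fun s _ => this s]
    rw [integral_sub hintt (hexpint.mul_const (w t))]
    rw [htrans, integral_mul_const, integral_exp_neg_mul_Ioi ha]
    ring
  rw [phiSol, hsplit, hxshift, xStat, ← hI0]
  field_simp
  ring

/-- `yStat` is `xStat` of the reflected path. -/
lemma yStat_eq_xStat (a b : ℝ) (w : ℝ → ℝ) :
    yStat a b w = xStat a b (fun s => w (-s)) := by
  rw [yStat, xStat]
  congr 1
  have := integral_comp_neg_Ioi (0:ℝ) (fun u => Real.exp (a * u) * w u)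
  rw [neg_zero] at this
  rw [← integral_Iic_eq_integral_Iio, ← this]
  congr 1
  ext s
  rw [mul_neg, neg_mul]

/-- `psiSol` is `phiSol` of the reflected path at reflected time. -/
lemma psiSol_eq_phiSol (a b t : ℝ) (w : ℝ → ℝ) (y : ℝ) :
    psiSol a b t w y = phiSol a b (-t) (fun s => w (-s)) y := by
  rw [psiSol, phiSol]
  have h1 : (∫ s in (0:ℝ)..(-t), Real.exp (-a * s) * w (-s))
      = -∫ s in (0:ℝ)..t, Real.exp (a * s) * w s := by
    have := intervalIntegral.integral_comp_neg (a := (0:ℝ)) (b := -t)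
      (fun u => Real.exp (a * u) * w u)
    simp only [neg_zero, neg_neg] at this
    rw [show (fun s : ℝ => Real.exp (-a * s) * w (-s))
        = (fun s : ℝ => Real.exp (a * -s) * w (-s)) by ext s; rw [mul_neg, neg_mul], this,
      intervalIntegral.integral_symm]
  rw [h1]
  have h2 : a * -t = -a * t := by ring
  rw [h2, neg_neg]
  ring

/-- Reflecting the shift. -/
lemma shiftPath_reflect (t : ℝ) (w : ℝ → ℝ) :
    (fun s => shiftPath t w (-s)) = shiftPath (-t) (fun s => w (-s)) := by
  ext s
  simp only [shiftPath, neg_neg]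
  congr 2
  ring

end Aux

/-- **Forward attraction on the stable manifold of the noisy saddle.** If the initial
condition lies on the stable manifold, `x₀ = x̃_{a₁,b₁}(w¹)`, then for every `t` the
Euclidean distance between the solution and the stationary orbit equals
`|y₀ - ỹ_{a₂,b₂}(w²)| e^{-a₂ t}`, and in particular it tends to `0` as `t → +∞`. -/
theorem noisy_saddle_stable_manifold_attraction
    (a₁ a₂ : ℝ) (ha₁ : 0 < a₁) (ha₂ : 0 < a₂) (b₁ b₂ : ℝ)
    (w₁ w₂ : ℝ → ℝ) (hw₁ : Continuous w₁) (hw₁0 : w₁ 0 = 0)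
    (hw₂ : Continuous w₂) (hw₂0 : w₂ 0 = 0)
    (C₁ : ℝ) (hC₁ : 0 ≤ C₁) (hg₁ : ∀ s : ℝ, |w₁ s| ≤ C₁ * (1 + |s|))
    (C₂ : ℝ) (hC₂ : 0 ≤ C₂) (hg₂ : ∀ s : ℝ, |w₂ s| ≤ C₂ * (1 + |s|))
    (x₀ y₀ : ℝ) (hx₀ : x₀ = xStat a₁ b₁ w₁) :
    (∀ t : ℝ,
      Real.sqrt ((phiSol a₁ b₁ t w₁ x₀ - xStat a₁ b₁ (shiftPath t w₁)) ^ 2 +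
          (psiSol a₂ b₂ t w₂ y₀ - yStat a₂ b₂ (shiftPath t w₂)) ^ 2) =
        |y₀ - yStat a₂ b₂ w₂| * Real.exp (-a₂ * t)) ∧
    Tendsto (fun t : ℝ =>
      Real.sqrt ((phiSol a₁ b₁ t w₁ x₀ - xStat a₁ b₁ (shiftPath t w₁)) ^ 2 +
        (psiSol a₂ b₂ t w₂ y₀ - yStat a₂ b₂ (shiftPath t w₂)) ^ 2)) atTop (𝓝 0) := by
  have hv₂ : Continuous (fun s : ℝ => w₂ (-s)) := hw₂.comp continuous_neg
  have hgv₂ : ∀ s : ℝ, |w₂ (-s)| ≤ C₂ * (1 + |s|) := fun s => by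
    simpa [abs_neg] using hg₂ (-s)
  have hx : ∀ t : ℝ, phiSol a₁ b₁ t w₁ x₀ - xStat a₁ b₁ (shiftPath t w₁) = 0 := by
    intro t
    rw [phiSol_eq ha₁ b₁ hC₁ hw₁ hg₁ t x₀, hx₀]
    ring
  have hy : ∀ t : ℝ, psiSol a₂ b₂ t w₂ y₀ - yStat a₂ b₂ (shiftPath t w₂)
      = Real.exp (-a₂ * t) * (y₀ - yStat a₂ b₂ w₂) := by
    intro t
    rw [psiSol_eq_phiSol, yStat_eq_xStat, shiftPath_reflect,
      phiSol_eq ha₂ b₂ hC₂ hv₂ hgv₂ (-t) y₀, yStat_eq_xStat]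
    rw [show a₂ * -t = -a₂ * t by ring]
    ring
  have key : ∀ t : ℝ,
      Real.sqrt ((phiSol a₁ b₁ t w₁ x₀ - xStat a₁ b₁ (shiftPath t w₁)) ^ 2 +
          (psiSol a₂ b₂ t w₂ y₀ - yStat a₂ b₂ (shiftPath t w₂)) ^ 2) =
        |y₀ - yStat a₂ b₂ w₂| * Real.exp (-a₂ * t) := by
    intro t
    rw [hx t, hy t]
    rw [show (0:ℝ) ^ 2 + (Real.exp (-a₂ * t) * (y₀ - yStat a₂ b₂ w₂)) ^ 2
        = (Real.exp (-a₂ * t) * (y₀ - yStat a₂ b₂ w₂)) ^ 2 by ring,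
      Real.sqrt_sq_eq_abs, abs_mul, abs_of_pos (Real.exp_pos _), mul_comm]
  refine ⟨key, ?_⟩
  have hmul : Tendsto (fun t : ℝ => a₂ * t) atTop atTop :=
    Tendsto.const_mul_atTop ha₂ tendsto_id
  have h1 : Tendsto (fun t : ℝ => Real.exp (-a₂ * t)) atTop (𝓝 0) := by
    have hneg : Tendsto (fun t : ℝ => -(a₂ * t)) atTop atBot := tendsto_neg_atTop_atBot.comp hmul
    exact (Real.tendsto_exp_atBot.comp hneg).congr fun t => by simp [Function.comp, neg_mul]
  have h2 := h1.const_mul |y₀ - yStat a₂ b₂ w₂|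
  rw [mul_zero] at h2
  exact h2.congr fun t => (key t).symm
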